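/- Let W be a finite group of linear automorphisms of a finite-dimensional real vector space V*, and let w be a linear automorphism of V*. Suppose that for every φ ∈ V* there exists w'_φ ∈ W with w'_φ(φ) = w(φ). Then w ∈ W, i.e., there is a single element w' ∈ W with w'(φ) = w(φ) for all φ. -/
import Mathlib

/-- If `W` is a finite group of linear automorphisms of a finite-dimensional real
vector space `V*`, and `w` is a linear automorphism such that every `φ ∈ V*` satisfies
`w'_φ φ = w φ` for some (possibly `φ`-dependent) `w'_φ ∈ W`, then `w ∈ W`. -/
theorem mem_of_pointwise_agreement
    (V : Type*) [AddCommGroup V] [Module ℝ V] [FiniteDimensional ℝ V]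
    (W : Subgroup (LinearMap.GeneralLinearGroup ℝ V)) [Finite W]
    (w : LinearMap.GeneralLinearGroup ℝ V)
    (hpt : ∀ φ : V, ∃ w' ∈ W, (w' : V →ₗ[ℝ] V) φ = (w : V →ₗ[ℝ] V) φ) :
    w ∈ W := by
  set p : W → Subspace ℝ V := fun u =>
    LinearMap.ker ((u.1 : V →ₗ[ℝ] V) - (w : V →ₗ[ℝ] V)) with hp
  have hcovers : ⋃ u, (p u : Set V) = Set.univ := by
    ext φ
    simp only [Set.mem_iUnion, Set.mem_univ, iff_true, SetLike.mem_coe, hp,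
      LinearMap.mem_ker, LinearMap.sub_apply, sub_eq_zero]
    obtain ⟨w', hw'W, hw'⟩ := hpt φ
    exact ⟨⟨w', hw'W⟩, hw'⟩
  obtain ⟨u, hu⟩ := Subspace.exists_eq_top_of_iUnion_eq_univ hcovers
  have heq : u.1 = w := by
    ext φ
    have : φ ∈ p u := hu ▸ Submodule.mem_top
    simpa [hp, sub_eq_zero] using this
  exact heq ▸ u.2
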